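/- For all P > 0, the value of a perpetual minimum-price-guarantee contract dominates the value of a perpetual collar contract with the same floor: V_MP(P) ≥ V_CP(P), where V_MP(P) = L₁P^{β₁} + FQ/r for P < F and M₂P^{β₂} + PQ/(r-μ) for P ≥ F; and V_CP(P) = E₁P^{β₁} + FQ/r for P < F, G₁P^{β₁} + G₂P^{β₂} + PQ/(r-μ) for F ≤ P < C, and H₂P^{β₂} + CQ/r for P ≥ C. -/

import Mathlib

open Real

set_option maxHeartbeats 1000000

/-- Bernoulli-type inequality for nonpositive exponents: for `x ≥ 1` and `β ≤ 0`,
`1 + β*(x-1) ≤ x ^ β`. -/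
lemma bernoulli_nonpos {x β : ℝ} (hx : 1 ≤ x) (hβ : β ≤ 0) :
    1 + β * (x - 1) ≤ x ^ β := by
  have hx0 : 0 < x := lt_of_lt_of_le one_pos hx
  have hlog : Real.log x ≤ x - 1 := Real.log_le_sub_one_of_pos hx0
  have h1 : β * (x - 1) ≤ β * Real.log x :=
    mul_le_mul_of_nonpos_left hlog hβ
  have h2 : 1 + β * Real.log x ≤ Real.exp (β * Real.log x) := by
    linarith [Real.add_one_le_exp (β * Real.log x)]
  have h3 : x ^ β = Real.exp (Real.log x * β) := Real.rpow_def_of_pos hx0 β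
  rw [h3, mul_comm (Real.log x) β]
  linarith

theorem VMP_ge_VCP
    (r σ μ β₁ β₂ F C Q : ℝ)
    (hr : 0 < r) (hσ : 0 < σ) (hμr : μ < r)
    (hF : 0 < F) (hFC : F ≤ C) (hQ : 0 < Q)
    (hβ₁ : 1 < β₁) (hβ₁root : (1/2)*σ^2*β₁*(β₁-1) + μ*β₁ - r = 0)
    (hβ₂ : β₂ < 0) (hβ₂root : (1/2)*σ^2*β₂*(β₂-1) + μ*β₂ - r = 0)
    (L₁ M₂ E₁ G₁ G₂ H₂ : ℝ)
    (hL₁ : L₁ = Q * F ^ (1-β₁) / (β₁ - β₂) * (β₂/r - (β₂ - 1)/(r - μ)))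
    (hM₂ : M₂ = Q * F ^ (1-β₂) / (β₁ - β₂) * (β₁/r - (β₁ - 1)/(r - μ)))
    (hE₁ : E₁ = (F ^ (1-β₁) - C ^ (1-β₁)) * Q / (β₁ - β₂) *
      (β₂/r - (β₂ - 1)/(r - μ)))
    (hG₁ : G₁ = -(C ^ (1-β₁) * Q / (β₁ - β₂)) * (β₂/r - (β₂ - 1)/(r - μ)))
    (hG₂ : G₂ = M₂)
    (hH₂ : H₂ = (F ^ (1-β₂) - C ^ (1-β₂)) * Q / (β₁ - β₂) *
      (β₁/r - (β₁ - 1)/(r - μ)))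
    (V_MP V_CP : ℝ → ℝ)
    (hVMP : ∀ P : ℝ, V_MP P =
      if P < F then L₁ * P ^ β₁ + F*Q/r else M₂ * P ^ β₂ + P*Q/(r-μ))
    (hVCP : ∀ P : ℝ, V_CP P =
      if P < F then E₁ * P ^ β₁ + F*Q/r
      else if P < C then G₁ * P ^ β₁ + G₂ * P ^ β₂ + P*Q/(r-μ)
      else H₂ * P ^ β₂ + C*Q/r) :
    ∀ P : ℝ, 0 < P → V_CP P ≤ V_MP P := by
  have hrμ : 0 < r - μ := by linarith
  have hβd : 0 < β₁ - β₂ := by linarith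
  have hC : 0 < C := lt_of_lt_of_le hF hFC
  -- r - μ * β₂ > 0
  have hrμβ₂ : 0 < r - μ * β₂ := by nlinarith [mul_pos (mul_pos hσ hσ) (mul_pos (neg_pos.2 hβ₂) (by linarith : (0:ℝ) < 1 - β₂))]
  have hrμβ₁ : 0 < r - μ * β₁ := by nlinarith [mul_pos (mul_pos hσ hσ) (mul_pos (by linarith : (0:ℝ) < β₁) (by linarith : (0:ℝ) < β₁ - 1))]
  have hk₂ : 0 < β₂/r - (β₂ - 1)/(r - μ) := by
    have : β₂/r - (β₂ - 1)/(r - μ) = (r - μ * β₂)/(r*(r-μ)) := by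
      field_simp; ring
    rw [this]
    exact div_pos hrμβ₂ (mul_pos hr hrμ)
  have hk₁ : 0 < β₁/r - (β₁ - 1)/(r - μ) := by
    have : β₁/r - (β₁ - 1)/(r - μ) = (r - μ * β₁)/(r*(r-μ)) := by
      field_simp; ring
    rw [this]
    exact div_pos hrμβ₁ (mul_pos hr hrμ)
  intro P hP
  rw [hVMP, hVCP]
  split_ifs with hPF hPC
  · -- P < F
    have hEL : E₁ ≤ L₁ := by
      have key : L₁ - E₁ = C ^ (1-β₁) * Q / (β₁ - β₂) * (β₂/r - (β₂ - 1)/(r - μ)) := by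
        rw [hE₁, hL₁]; ring
      have hCp : 0 < C ^ (1-β₁) := rpow_pos_of_pos hC _
      linarith [mul_pos (div_pos (mul_pos hCp hQ) hβd) hk₂, key]
    have hPp : (0:ℝ) < P ^ β₁ := rpow_pos_of_pos hP _
    linarith [mul_le_mul_of_nonneg_right hEL hPp.le]
  · -- F ≤ P < C
    have hG₁neg : G₁ ≤ 0 := by
      rw [hG₁]
      have hCp : 0 < C ^ (1-β₁) := rpow_pos_of_pos hC _
      have : 0 ≤ C ^ (1-β₁) * Q / (β₁ - β₂) * (β₂/r - (β₂ - 1)/(r - μ)) :=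
        le_of_lt (mul_pos (div_pos (mul_pos hCp hQ) hβd) hk₂)
      linarith [this]
    have hPp : (0:ℝ) < P ^ β₁ := rpow_pos_of_pos hP _
    have : G₁ * P ^ β₁ ≤ 0 := mul_nonpos_of_nonpos_of_nonneg hG₁neg hPp.le
    rw [hG₂]
    linarith
  · -- P ≥ C
    have hCP : C ≤ P := not_lt.1 hPC
    set x : ℝ := P / C with hx
    have hx1 : 1 ≤ x := (one_le_div hC).2 hCP
    have hx0 : 0 < x := lt_of_lt_of_le one_pos hx1
    have hPCx : P = C * x := by rw [hx]; field_simp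
    -- a := M₂ - H₂
    have ha : M₂ - H₂ = C ^ (1-β₂) * Q / (β₁ - β₂) * (β₁/r - (β₁ - 1)/(r - μ)) := by
      rw [hM₂, hH₂]; ring
    have hCb : 0 < C ^ (1-β₂) := rpow_pos_of_pos hC _
    have hann : 0 ≤ M₂ - H₂ := by
      rw [ha]
      exact le_of_lt (mul_pos (div_pos (mul_pos hCb hQ) hβd) hk₁)
    -- P ^ β₂ = C ^ β₂ * x ^ β₂
    have hPb : P ^ β₂ = C ^ β₂ * x ^ β₂ := by
      rw [hPCx, Real.mul_rpow hC.le hx0.le]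
    have hCbb : 0 < C ^ β₂ := rpow_pos_of_pos hC _
    have hCC : C ^ (1-β₂) * C ^ β₂ = C := by
      rw [← Real.rpow_add hC]; norm_num
    -- Bernoulli
    have hbern : 1 + β₂ * (x - 1) ≤ x ^ β₂ := bernoulli_nonpos hx1 hβ₂.le
    -- (M₂ - H₂) * C ^ β₂ = C * Q / (β₁-β₂) * k₁
    have hac : (M₂ - H₂) * C ^ β₂ = C * Q / (β₁ - β₂) * (β₁/r - (β₁ - 1)/(r - μ)) := by
      rw [ha]
      have h' : C ^ (1-β₂) * Q / (β₁ - β₂) * (β₁/r - (β₁ - 1)/(r - μ)) * C ^ β₂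
          = (C ^ (1-β₂) * C ^ β₂) * Q / (β₁ - β₂) * (β₁/r - (β₁ - 1)/(r - μ)) := by ring
      rw [h', hCC]
    have hacpos : 0 ≤ (M₂ - H₂) * C ^ β₂ := mul_nonneg hann hCbb.le
    -- key estimate
    have hstep : (M₂ - H₂) * C ^ β₂ * (1 + β₂ * (x - 1)) ≤ (M₂ - H₂) * P ^ β₂ := by
      rw [hPb, show (M₂ - H₂) * (C ^ β₂ * x ^ β₂) = (M₂ - H₂) * C ^ β₂ * x ^ β₂ by ring]
      exact mul_le_mul_of_nonneg_left hbern hacpos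
    -- final algebraic inequality
    have hfinal : 0 ≤ C * Q / (β₁ - β₂) * (β₁/r - (β₁ - 1)/(r - μ)) * (1 + β₂ * (x - 1))
        + C * x * Q / (r - μ) - C * Q / r := by
      have hiden : C * Q / (β₁ - β₂) * (β₁/r - (β₁ - 1)/(r - μ)) * (1 + β₂ * (x - 1))
          + C * x * Q / (r - μ) - C * Q / r
          = C * Q * ((r - μ * β₂) + (x - 1) * β₁ * (r - μ * β₂)) / ((β₁ - β₂) * r * (r - μ)) := by
        field_simp
        ring
      rw [hiden]
      apply div_nonneg _ (le_of_lt (mul_pos (mul_pos hβd hr) hrμ))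
      have h1 : 0 ≤ (x - 1) * β₁ * (r - μ * β₂) := by
        apply mul_nonneg (mul_nonneg (by linarith) (by linarith)) hrμβ₂.le
      exact mul_nonneg (mul_pos hC hQ).le (by linarith)
    have hPeq : P * Q / (r - μ) = C * x * Q / (r - μ) := by rw [hPCx]
    rw [← hac] at hfinal
    have hexp : (M₂ - H₂) * P ^ β₂ = M₂ * P ^ β₂ - H₂ * P ^ β₂ := by ring
    linarith [hstep, hfinal, hPeq, hexp]
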